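/- Let A be a countable alphabet, P a probability distribution on A, and D a proper and almost surely complete dictionary over A. Then for every positive integer m, ∑_{α∈D, |α|≥m} P(α)|α| ≥ ∑_{β ∈ D_m^⊥} P(β)|β|, where D_m^⊥ = {α ∈ D : |α| = m} ∪ T_m and T_m = {α ∈ A^m : no β ∈ D is a prefix of α}, with all sums taken in [0,∞]. -/

import Mathlib

open scoped ENNReal
open Filter

/-- The probability of a finite string, obtained by extending the
distribution `P` multiplicatively: `P(a₁⋯aₙ) = ∏ᵢ P(aᵢ)`. -/
noncomputable def strProb {A : Type*} (P : PMF A) (l : List A) : ℝ≥0∞ :=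
  (l.map fun a => P a).prod

/-- A dictionary is a set of nonempty finite strings. -/
def IsDictionary {A : Type*} (D : Set (List A)) : Prop :=
  ∀ α ∈ D, α ≠ []

/-- A dictionary is proper if no string in it is a (proper) prefix of
another string in it. -/
def IsProper {A : Type*} (D : Set (List A)) : Prop :=
  ∀ α ∈ D, ∀ β ∈ D, α <+: β → α = β

/-- A dictionary is complete if every infinite sequence over `A` has a
prefix in it. -/
def IsCompleteDict {A : Type*} (D : Set (List A)) : Prop :=
  ∀ x : ℕ → A, ∃ α ∈ D, α = (List.range α.length).map x

/-- The probability that the length-`n` prefix of a random infinite sequence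
has some prefix belonging to `D`. -/
noncomputable def prefixProb {A : Type*} (P : PMF A) (D : Set (List A)) (n : ℕ) : ℝ≥0∞ :=
  ∑' γ : {γ : List A // γ.length = n ∧ ∃ β ∈ D, β <+: γ}, strProb P γ

/-- `D` is almost surely complete: under the infinite product measure `P^ℕ`,
the event that an infinite sequence has a prefix in `D` has probability `1`.
(By continuity from below, this probability is the limit, as `n → ∞`, of the
probability that the length-`n` prefix has a prefix in `D`.) -/
def IsASC {A : Type*} (P : PMF A) (D : Set (List A)) : Prop :=
  Tendsto (prefixProb P D) atTop (nhds 1)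

/-- `Tset D n` = strings of length `n` having no prefix in `D`. -/
def Tset {A : Type*} (D : Set (List A)) (n : ℕ) : Set (List A) :=
  {α | α.length = n ∧ ∀ β ∈ D, ¬ β <+: α}

/-- `Dperp D n = {α ∈ D : |α| = n} ∪ Tₙ`. -/
def Dperp {A : Type*} (D : Set (List A)) (n : ℕ) : Set (List A) :=
  {α ∈ D | α.length = n} ∪ Tset D n

/-- `Dn D n = {α ∈ D : |α| < n} ∪ Dₙ^⊥`. -/
def Dn {A : Type*} (D : Set (List A)) (n : ℕ) : Set (List A) :=
  {α ∈ D | α.length < n} ∪ Dperp D n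

/-- The one-letter extensions `αA = {αa : a ∈ A}` of a string `α`. -/
def oneExt {A : Type*} (α : List A) : Set (List A) :=
  {l | ∃ a : A, l = α ++ [a]}

/-- The extension `D[α] = (D \ {α}) ∪ αA` of a dictionary at `α`. -/
def extendDict {A : Type*} (D : Set (List A)) (α : List A) : Set (List A) :=
  (D \ {α}) ∪ oneExt α

/-- The nonnegative entropy contribution `-p log₂ p ∈ [0,∞]` of a
probability value `p`. -/
noncomputable def entTerm (p : ℝ≥0∞) : ℝ≥0∞ :=
  ENNReal.ofReal (-(p.toReal * Real.logb 2 p.toReal))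

/-- The entropy `H(E) = -∑_{α∈E} P(α) log₂ P(α)` of a dictionary, in `[0,∞]`. -/
noncomputable def dictEntropy {A : Type*} (P : PMF A) (E : Set (List A)) : ℝ≥0∞ :=
  ∑' α : E, entTerm (strProb P α)

/-- The average length `l̄(E) = ∑_{α∈E} P(α)|α|` of a dictionary, in `[0,∞]`. -/
noncomputable def avgLen {A : Type*} (P : PMF A) (E : Set (List A)) : ℝ≥0∞ :=
  ∑' α : E, strProb P α * (α : List A).length

/-- The source entropy `H(P) = -∑_{a∈A} P(a) log₂ P(a)`, in `[0,∞]`. -/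
noncomputable def srcEntropy {A : Type*} (P : PMF A) : ℝ≥0∞ :=
  ∑' a : A, entTerm (P a)

section Aux
variable {A : Type*} (P : PMF A)

lemma strProb_append (l1 l2 : List A) :
    strProb P (l1 ++ l2) = strProb P l1 * strProb P l2 := by
  simp [strProb]

noncomputable def mass (S : Set (List A)) : ℝ≥0∞ :=
  ∑' γ : List A, S.indicator (strProb P) γ

lemma mass_eq (S : Set (List A)) : mass P S = ∑' γ : S, strProb P (γ : List A) :=
  (tsum_subtype S (strProb P)).symm

lemma mass_mono {S T : Set (List A)} (h : S ⊆ T) : mass P S ≤ mass P T := by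
  refine ENNReal.tsum_le_tsum fun γ => ?_
  by_cases hS : γ ∈ S
  · rw [Set.indicator_of_mem hS, Set.indicator_of_mem (h hS)]
  · simp [Set.indicator_of_notMem hS]

lemma mass_union_le (S T : Set (List A)) : mass P (S ∪ T) ≤ mass P S + mass P T := by
  rw [mass, mass, mass, ← ENNReal.tsum_add]
  refine ENNReal.tsum_le_tsum fun γ => ?_
  classical
  by_cases hS : γ ∈ S <;> by_cases hT : γ ∈ T <;>
    simp [Set.indicator_apply, hS, hT]

lemma mass_pair_le {S T U : Set (List A)} (hST : Disjoint S T) (hSU : S ⊆ U) (hTU : T ⊆ U) :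
    mass P S + mass P T ≤ mass P U := by
  rw [mass, mass, mass, ← ENNReal.tsum_add]
  refine ENNReal.tsum_le_tsum fun γ => ?_
  classical
  by_cases hS : γ ∈ S
  · have hT : γ ∉ T := fun hT => (Set.disjoint_left.mp hST hS) hT
    simp [Set.indicator_apply, hS, hT, hSU hS]
  · by_cases hT : γ ∈ T
    · simp [Set.indicator_apply, hS, hT, hTU hT]
    · simp [Set.indicator_apply, hS, hT]

def consEquiv (A : Type*) (n : ℕ) :
    A × {γ : List A // γ.length = n} ≃ {γ : List A // γ.length = n + 1} where
  toFun p := ⟨p.1 :: p.2.1, by simp [p.2.2]⟩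
  invFun γ := (γ.1.head (by intro e; have := γ.2; simp [e] at this),
    ⟨γ.1.tail, by simp [γ.2]⟩)
  left_inv p := rfl
  right_inv γ := Subtype.ext (List.cons_head_tail _)

lemma tsum_len (n : ℕ) :
    ∑' γ : {γ : List A // γ.length = n}, strProb P (γ : List A) = 1 := by
  induction n with
  | zero =>
      rw [tsum_eq_single (⟨[], rfl⟩ : {γ : List A // γ.length = 0})]
      · simp [strProb]
      · rintro ⟨l, hl⟩ hb
        exact absurd (Subtype.ext (List.length_eq_zero_iff.mp hl)) hb
  | succ n ih =>
      rw [← (consEquiv A n).tsum_eq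
        (fun γ : {γ : List A // γ.length = n + 1} => strProb P (γ : List A))]
      have hc : ∀ p : A × {γ : List A // γ.length = n},
          strProb P ((consEquiv A n p : List A)) = P p.1 * strProb P p.2.1 := by
        rintro ⟨a, l, hl⟩; show strProb P (a :: l) = _; simp [strProb]
      rw [tsum_congr hc]
      calc ∑' p : A × {γ : List A // γ.length = n}, P p.1 * strProb P p.2.1
          = ∑' a, ∑' l : {γ : List A // γ.length = n}, P a * strProb P l.1 :=
            ENNReal.tsum_prod (f := fun a (l : {γ : List A // γ.length = n}) => P a * strProb P l.1)
        _ = ∑' a, P a * ∑' l : {γ : List A // γ.length = n}, strProb P l.1 :=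
            tsum_congr fun a => ENNReal.tsum_mul_left
        _ = 1 := by
            rw [tsum_congr fun a => by rw [ih, mul_one]]
            exact P.tsum_coe

lemma mass_len (n : ℕ) : mass P {γ : List A | γ.length = n} = 1 := by
  rw [mass_eq]; exact tsum_len P n

def extEquiv (α : List A) (n : ℕ) (h : α.length ≤ n) :
    {δ : List A // δ.length = n - α.length} ≃ {γ : List A // γ.length = n ∧ α <+: γ} where
  toFun δ := ⟨α ++ δ.1,
    ⟨by rw [List.length_append, δ.2, Nat.add_sub_cancel' h], List.prefix_append _ _⟩⟩
  invFun γ := ⟨γ.1.drop α.length, by rw [List.length_drop, γ.2.1]⟩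
  left_inv δ := Subtype.ext List.drop_left
  right_inv γ := Subtype.ext (by
    obtain ⟨δ, hδ⟩ := γ.2.2
    show α ++ List.drop α.length γ.1 = γ.1
    rw [← hδ, List.drop_left])

lemma mass_ext (α : List A) (n : ℕ) (h : α.length ≤ n) :
    mass P {γ : List A | γ.length = n ∧ α <+: γ} = strProb P α := by
  rw [mass_eq]
  calc ∑' γ : {γ : List A | γ.length = n ∧ α <+: γ}, strProb P (γ : List A)
      = ∑' δ : {δ : List A // δ.length = n - α.length},
          strProb P ((extEquiv α n h δ : List A)) :=
        ((extEquiv α n h).tsum_eq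
          (fun γ : {γ : List A // γ.length = n ∧ α <+: γ} => strProb P (γ : List A))).symm
    _ = ∑' δ : {δ : List A // δ.length = n - α.length}, strProb P α * strProb P δ.1 :=
        tsum_congr fun δ => strProb_append P α δ.1
    _ = strProb P α := by rw [ENNReal.tsum_mul_left, tsum_len, mul_one]

lemma mass_ext_le (α : List A) (n : ℕ) :
    mass P {γ : List A | γ.length = n ∧ α <+: γ} ≤ strProb P α := by
  by_cases h : α.length ≤ n
  · exact le_of_eq (mass_ext P α n h)
  · have he : {γ : List A | γ.length = n ∧ α <+: γ} = ∅ := by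
      ext γ
      simp only [Set.mem_setOf_eq, Set.mem_empty_iff_false, iff_false, not_and]
      intro hγ hpre
      exact h (hγ ▸ hpre.length_le)
    rw [he]
    simp [mass]

lemma key_step (D : Set (List A)) (hasc : IsASC P D) {m : ℕ} {β : List A}
    (hβ : β ∈ Tset D m) :
    strProb P β ≤ mass P {α : List A | α ∈ D ∧ β <+: α} := by
  set Q := mass P {α : List A | α ∈ D ∧ β <+: α} with hQ
  have hβlen : β.length = m := hβ.1
  have hn : ∀ n, m ≤ n → prefixProb P D n + strProb P β ≤ Q + 1 := by
    intro n hmn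
    have hpp : prefixProb P D n = mass P {γ : List A | γ.length = n ∧ ∃ d ∈ D, d <+: γ} :=
      (mass_eq P _).symm
    set S1 : Set (List A) := {γ | γ.length = n ∧ (∃ d ∈ D, d <+: γ) ∧ β <+: γ} with hS1
    set S2 : Set (List A) := {γ | γ.length = n ∧ ¬ β <+: γ} with hS2
    have hsub : {γ : List A | γ.length = n ∧ ∃ d ∈ D, d <+: γ} ⊆ S1 ∪ S2 := by
      rintro γ ⟨hγ, hd⟩
      by_cases hb : β <+: γ
      · exact Or.inl ⟨hγ, hd, hb⟩
      · exact Or.inr ⟨hγ, hb⟩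
    have h1 : prefixProb P D n ≤ mass P S1 + mass P S2 :=
      hpp ▸ le_trans (mass_mono P hsub) (mass_union_le P S1 S2)
    have h2 : mass P S1 ≤ Q := by
      have hpt : ∀ γ : List A, S1.indicator (strProb P) γ ≤
          ∑' α : {α : List A | α ∈ D ∧ β <+: α},
            Set.indicator {γ' : List A | γ'.length = n ∧ (α : List A) <+: γ'} (strProb P) γ := by
        intro γ
        by_cases hγ : γ ∈ S1
        · obtain ⟨hlen, ⟨d, hdD, hdγ⟩, hβγ⟩ := id hγ
          have hβd : β <+: d := by
            rcases List.prefix_or_prefix_of_prefix hβγ hdγ with h | h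
            · exact h
            · exact absurd h (hβ.2 d hdD)
          have hd' : d ∈ {α : List A | α ∈ D ∧ β <+: α} := by exact ⟨hdD, hβd⟩
          have hmem : γ ∈ {γ' : List A | γ'.length = n ∧ d <+: γ'} := by exact ⟨hlen, hdγ⟩
          have key := ENNReal.le_tsum (f := fun α : {α : List A | α ∈ D ∧ β <+: α} =>
              Set.indicator {γ' : List A | γ'.length = n ∧ (α : List A) <+: γ'} (strProb P) γ)
            ⟨d, hd'⟩
          rw [Set.indicator_of_mem hmem] at key
          rw [Set.indicator_of_mem hγ]
          exact key
        · simp [Set.indicator_of_notMem hγ]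
      calc mass P S1
          ≤ ∑' γ : List A, ∑' α : {α : List A | α ∈ D ∧ β <+: α},
              Set.indicator {γ' : List A | γ'.length = n ∧ (α : List A) <+: γ'} (strProb P) γ :=
            ENNReal.tsum_le_tsum hpt
        _ = ∑' α : {α : List A | α ∈ D ∧ β <+: α},
              mass P {γ' : List A | γ'.length = n ∧ (α : List A) <+: γ'} :=
            ENNReal.tsum_comm
        _ ≤ ∑' α : {α : List A | α ∈ D ∧ β <+: α}, strProb P (α : List A) :=
            ENNReal.tsum_le_tsum fun α => mass_ext_le P (α : List A) n
        _ = Q := by rw [hQ, mass_eq]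
    have h3 : strProb P β + mass P S2 ≤ 1 := by
      have hd : Disjoint {γ : List A | γ.length = n ∧ β <+: γ} S2 := by
        rw [Set.disjoint_left]
        rintro γ ⟨_, hb⟩ ⟨_, hnb⟩
        exact hnb hb
      have hle := mass_pair_le P (U := {γ : List A | γ.length = n}) hd
        (fun γ hγ => hγ.1) (fun γ (hγ : γ ∈ S2) => hγ.1)
      rw [mass_ext P β n (by rw [hβlen]; exact hmn), mass_len P n] at hle
      exact hle
    calc prefixProb P D n + strProb P β
        ≤ (mass P S1 + mass P S2) + strProb P β := add_le_add_left h1 _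
      _ = mass P S1 + (strProb P β + mass P S2) := by ring
      _ ≤ Q + 1 := add_le_add h2 h3
  have hlim : (1 : ℝ≥0∞) + strProb P β ≤ Q + 1 := by
    refine le_of_tendsto (hasc.add_const (strProb P β)) ?_
    filter_upwards [eventually_ge_atTop m] with n hn' using hn n hn'
  have h' : strProb P β + 1 ≤ Q + 1 := by rwa [add_comm] at hlim
  exact (ENNReal.add_le_add_iff_right ENNReal.one_ne_top).mp h'

lemma sum_step (D : Set (List A)) (m : ℕ) :
    ∑' β : Tset D m, mass P {α : List A | α ∈ D ∧ (β : List A) <+: α}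
      ≤ mass P {α : List A | α ∈ D ∧ m < α.length} := by
  have swap : ∑' β : Tset D m, mass P {α : List A | α ∈ D ∧ (β : List A) <+: α}
      = ∑' γ : List A, ∑' β : Tset D m,
        Set.indicator {α : List A | α ∈ D ∧ (β : List A) <+: α} (strProb P) γ :=
    ENNReal.tsum_comm
  rw [swap]
  refine ENNReal.tsum_le_tsum fun γ => ?_
  by_cases hex : ∃ β0 : Tset D m, γ ∈ {α : List A | α ∈ D ∧ (β0 : List A) <+: α}
  · obtain ⟨β0, hγ0⟩ := hex
    obtain ⟨hγD, hβ0γ⟩ := hγ0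
    have huniq : ∀ β : Tset D m, β ≠ β0 →
        Set.indicator {α : List A | α ∈ D ∧ (β : List A) <+: α} (strProb P) γ = 0 := by
      intro β hne
      rw [Set.indicator_of_notMem]
      rintro ⟨_, hpre⟩
      have hlen : (β : List A).length = (β0 : List A).length := by
        rw [β.2.1, β0.2.1]
      have heq : (β : List A) = (β0 : List A) := by
        rcases List.prefix_or_prefix_of_prefix hpre hβ0γ with h | h
        · exact h.eq_of_length hlen
        · exact (h.eq_of_length hlen.symm).symm
      exact hne (Subtype.ext heq)
    rw [tsum_eq_single β0 huniq]
    have hγgt : γ ∈ {α : List A | α ∈ D ∧ m < α.length} := by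
      refine ⟨hγD, ?_⟩
      have hle : m ≤ γ.length := by
        have := hβ0γ.length_le
        rw [β0.2.1] at this
        exact this
      rcases lt_or_eq_of_le hle with h | h
      · exact h
      · exfalso
        have heq : (β0 : List A) = γ := hβ0γ.eq_of_length (by rw [β0.2.1, ← h])
        exact β0.2.2 γ hγD (by rw [heq])
    have hmem : γ ∈ {α : List A | α ∈ D ∧ (β0 : List A) <+: α} := by exact ⟨hγD, hβ0γ⟩
    rw [Set.indicator_of_mem hmem, Set.indicator_of_mem hγgt]
  · push_neg at hex
    have hz : ∀ β : Tset D m,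
        Set.indicator {α : List A | α ∈ D ∧ (β : List A) <+: α} (strProb P) γ = 0 :=
      fun β => Set.indicator_of_notMem (hex β) _
    rw [tsum_congr hz, tsum_zero]
    exact zero_le

end Aux

/-- If `D` is proper and almost surely complete then, for
every positive integer `m`,
`∑_{α∈D, |α|≥m} P(α)|α| ≥ ∑_{β ∈ D_m^⊥} P(β)|β|`. -/
theorem avgLen_Dperp_le {A : Type*} [Countable A] (P : PMF A)
    (D : Set (List A)) (hdict : IsDictionary D) (hprop : IsProper D)
    (hasc : IsASC P D) (m : ℕ) (hm : 0 < m) :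
    avgLen P (Dperp D m) ≤ avgLen P {α ∈ D | m ≤ α.length} := by
  classical
  have hmass : mass P (Dperp D m) ≤ mass P {α : List A | α ∈ D ∧ m ≤ α.length} := by
    have hTD : mass P (Tset D m) ≤ mass P {α : List A | α ∈ D ∧ m < α.length} := by
      calc mass P (Tset D m) = ∑' β : Tset D m, strProb P (β : List A) := mass_eq P _
        _ ≤ ∑' β : Tset D m, mass P {α : List A | α ∈ D ∧ (β : List A) <+: α} :=
            ENNReal.tsum_le_tsum fun β => key_step P D hasc β.2
        _ ≤ mass P {α : List A | α ∈ D ∧ m < α.length} := sum_step P D m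
    have h2 : mass P (Dperp D m) ≤ mass P {α ∈ D | α.length = m} + mass P (Tset D m) :=
      mass_union_le P _ _
    have h3 : mass P {α ∈ D | α.length = m} + mass P {α : List A | α ∈ D ∧ m < α.length}
        ≤ mass P {α : List A | α ∈ D ∧ m ≤ α.length} := by
      refine mass_pair_le P ?_ ?_ ?_
      · rw [Set.disjoint_left]
        rintro α ⟨_, h1⟩ ⟨_, h2⟩
        omega
      · rintro α ⟨hD, h⟩
        exact ⟨hD, le_of_eq h.symm⟩
      · rintro α ⟨hD, h⟩
        exact ⟨hD, le_of_lt h⟩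
    calc mass P (Dperp D m) ≤ mass P {α ∈ D | α.length = m} + mass P (Tset D m) := h2
      _ ≤ mass P {α ∈ D | α.length = m} + mass P {α : List A | α ∈ D ∧ m < α.length} :=
          add_le_add_right hTD _
      _ ≤ _ := h3
  have hlenD : ∀ α ∈ Dperp D m, α.length = m := by
    rintro α (⟨_, h⟩ | ⟨h, _⟩) <;> exact h
  calc avgLen P (Dperp D m)
      = ∑' α : Dperp D m, strProb P (α : List A) * m := by
        refine tsum_congr fun α => ?_
        rw [hlenD α α.2]
    _ = mass P (Dperp D m) * m := by rw [ENNReal.tsum_mul_right, mass_eq]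
    _ ≤ mass P {α : List A | α ∈ D ∧ m ≤ α.length} * m := mul_le_mul_left hmass _
    _ = ∑' α : {α : List A | α ∈ D ∧ m ≤ α.length}, strProb P (α : List A) * m := by
        rw [mass_eq, ENNReal.tsum_mul_right]
    _ ≤ avgLen P {α ∈ D | m ≤ α.length} := by
        refine ENNReal.tsum_le_tsum fun α => ?_
        exact mul_le_mul_right (by exact_mod_cast α.2.2) _
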